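/- Let u₀ ≥ 0 with ∫_ℝ u₀ = 1 and suppose ∫_ℝ e^{t y} u₀(y) dy < ∞ for all t in an interval [0,T). Then the function u(t,x) := e^{t x} (∫_ℝ (4πt)^{−1/2} e^{−(x+t²−y)²/(4t)} u₀(y) dy) / (∫_ℝ e^{t y} u₀(y) dy) satisfies ∫_ℝ u(t,x) dx = 1 for every t ∈ (0,T). -/

import Mathlib

open Real MeasureTheory Set

lemma exp_combine (t y x : ℝ) (ht : 0 < t) :
    Real.exp (t * x) * Real.exp (-(x + t ^ 2 - y) ^ 2 / (4 * t)) =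
      Real.exp (t * y) * Real.exp (-(4 * t)⁻¹ * (x - (y + t ^ 2)) ^ 2) := by
  rw [← Real.exp_add, ← Real.exp_add]
  congr 1
  have h4t : (4 * t) ≠ 0 := by positivity
  field_simp
  ring

lemma gauss_integrable (t y : ℝ) (ht : 0 < t) :
    Integrable (fun x => Real.exp (t * x) *
      ((Real.sqrt (4 * Real.pi * t))⁻¹ *
        Real.exp (-(x + t ^ 2 - y) ^ 2 / (4 * t)))) := by
  have hb : (0:ℝ) < (4 * t)⁻¹ := by positivity
  have : Integrable (fun x : ℝ =>
      (Real.sqrt (4 * Real.pi * t))⁻¹ * (Real.exp (t * y) *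
        Real.exp (-(4 * t)⁻¹ * (x - (y + t ^ 2)) ^ 2))) := by
    exact (((integrable_exp_neg_mul_sq hb).comp_sub_right (y + t ^ 2)).const_mul _).const_mul _
  refine this.congr (Filter.Eventually.of_forall fun x => ?_)
  linear_combination (Real.sqrt (4 * Real.pi * t))⁻¹ * (exp_combine t y x ht).symm

lemma gauss_integral (t y : ℝ) (ht : 0 < t) :
    (∫ x : ℝ, Real.exp (t * x) *
      ((Real.sqrt (4 * Real.pi * t))⁻¹ *
        Real.exp (-(x + t ^ 2 - y) ^ 2 / (4 * t)))) = Real.exp (t * y) := by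
  have hb : (0:ℝ) < (4 * t)⁻¹ := by positivity
  have h1 : ∀ x : ℝ, Real.exp (t * x) *
      ((Real.sqrt (4 * Real.pi * t))⁻¹ * Real.exp (-(x + t ^ 2 - y) ^ 2 / (4 * t))) =
      ((Real.sqrt (4 * Real.pi * t))⁻¹ * Real.exp (t * y)) *
        Real.exp (-(4 * t)⁻¹ * (x - (y + t ^ 2)) ^ 2) := by
    intro x
    linear_combination (Real.sqrt (4 * Real.pi * t))⁻¹ * (exp_combine t y x ht)
  simp_rw [h1]
  rw [integral_const_mul]
  have h2 : (∫ x : ℝ, Real.exp (-(4 * t)⁻¹ * (x - (y + t ^ 2)) ^ 2)) =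
      ∫ x : ℝ, Real.exp (-(4 * t)⁻¹ * x ^ 2) := by
    exact integral_sub_right_eq_self (fun x => Real.exp (-(4 * t)⁻¹ * x ^ 2)) (y + t ^ 2)
  rw [h2, integral_gaussian]
  have h3 : Real.pi / (4 * t)⁻¹ = 4 * Real.pi * t := by
    field_simp
  rw [h3]
  have hs : (0:ℝ) < Real.sqrt (4 * Real.pi * t) := Real.sqrt_pos.mpr (by positivity)
  field_simp

theorem mass_conservation_explicit (u₀ : ℝ → ℝ) (T : ℝ)
    (h0 : ∀ y, 0 ≤ u₀ y) (hint : Integrable u₀)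
    (hmass : (∫ y : ℝ, u₀ y) = 1)
    (hexp : ∀ t ∈ Set.Ico (0:ℝ) T,
      Integrable (fun y => Real.exp (t * y) * u₀ y))
    (t : ℝ) (ht : t ∈ Set.Ioo (0:ℝ) T) :
    (∫ x : ℝ, Real.exp (t * x) *
        (∫ y : ℝ, (Real.sqrt (4 * Real.pi * t))⁻¹ *
          Real.exp (-(x + t ^ 2 - y) ^ 2 / (4 * t)) * u₀ y) /
        (∫ y : ℝ, Real.exp (t * y) * u₀ y)) = 1 := by
  obtain ⟨ht0, htT⟩ := ht
  have hZint : Integrable (fun y => Real.exp (t * y) * u₀ y) :=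
    hexp t ⟨ht0.le, htT⟩
  set Z : ℝ := ∫ y : ℝ, Real.exp (t * y) * u₀ y with hZ
  -- Z ≠ 0
  have hZpos : Z ≠ 0 := by
    intro h
    have hnn : 0 ≤ fun y => Real.exp (t * y) * u₀ y := fun y =>
      mul_nonneg (Real.exp_pos _).le (h0 y)
    have := (integral_eq_zero_iff_of_nonneg hnn hZint).mp h
    have hu0 : u₀ =ᵐ[volume] 0 := by
      filter_upwards [this] with y hy
      have : Real.exp (t * y) * u₀ y = 0 := hy
      simpa [Real.exp_ne_zero] using this
    rw [integral_congr_ae hu0] at hmass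
    simp at hmass
  -- the double function
  set F : ℝ → ℝ → ℝ := fun x y => Real.exp (t * x) *
    ((Real.sqrt (4 * Real.pi * t))⁻¹ *
      Real.exp (-(x + t ^ 2 - y) ^ 2 / (4 * t))) * u₀ y with hF
  have hFmeas : AEStronglyMeasurable (Function.uncurry F)
      ((volume : Measure ℝ).prod volume) := by
    apply AEStronglyMeasurable.mul
    · exact (Continuous.aestronglyMeasurable (by fun_prop))
    · exact hint.1.comp_snd
  have hFint : Integrable (Function.uncurry F)
      ((volume : Measure ℝ).prod volume) := by
    rw [integrable_prod_iff' hFmeas]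
    constructor
    · filter_upwards with y
      exact (gauss_integrable t y ht0).mul_const (u₀ y)
    · have hnorm : ∀ y : ℝ, (∫ x : ℝ, ‖Function.uncurry F (x, y)‖) =
          Real.exp (t * y) * u₀ y := by
        intro y
        have h1 : ∀ x : ℝ, ‖Function.uncurry F (x, y)‖ = F x y := by
          intro x
          have hnn : 0 ≤ F x y := by
            rw [hF]
            exact mul_nonneg (by positivity) (h0 y)
          rw [Function.uncurry_apply_pair, Real.norm_eq_abs, abs_of_nonneg hnn]
        simp_rw [h1, hF]
        rw [integral_mul_const, gauss_integral t y ht0]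
      refine hZint.congr ?_
      filter_upwards with y
      exact (hnorm y).symm
  -- swap integrals
  have hswap : (∫ x : ℝ, ∫ y : ℝ, F x y) = ∫ y : ℝ, ∫ x : ℝ, F x y :=
    integral_integral_swap hFint
  have hinner : (∫ y : ℝ, ∫ x : ℝ, F x y) = Z := by
    rw [hZ]
    congr 1
    ext y
    rw [hF]
    simp only
    rw [integral_mul_const, gauss_integral t y ht0]
  -- rewrite the goal
  have hgoal : ∀ x : ℝ, Real.exp (t * x) *
      (∫ y : ℝ, (Real.sqrt (4 * Real.pi * t))⁻¹ *
        Real.exp (-(x + t ^ 2 - y) ^ 2 / (4 * t)) * u₀ y) / Z =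
      (∫ y : ℝ, F x y) / Z := by
    intro x
    congr 1
    rw [← integral_const_mul]
    congr 1
    ext y
    rw [hF]
    ring
  simp_rw [hgoal, div_eq_mul_inv, integral_mul_const]
  rw [hswap, hinner]
  exact mul_inv_cancel₀ hZpos
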